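/- For every n ≥ 1 and every real (or complex) number x, the falling factorial Q_n(2x) satisfies Q_n(2x) = \sum_{k=\lceil n/2 \rceil}^{n} \frac{n! \, 2^{2k-n}}{(n-k)!\,(2k-n)!} \, Q_k(x), where Q_n(x) = x(x-1)(x-2)\cdots(x-n+1). -/

import Mathlib

/-- Falling factorial `Q n x = x (x-1) ⋯ (x-n+1)`. -/
def Q (n : ℕ) (x : ℝ) : ℝ := ∏ i ∈ Finset.range n, (x - i)

/-- Coefficient in the duplication formula, set to `0` outside the valid range. -/
noncomputable def C (n k : ℕ) : ℝ :=
  if n ≤ 2*k ∧ k ≤ n then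
    (Nat.factorial n : ℝ) * 2 ^ (2*k - n) /
      ((Nat.factorial (n - k) : ℝ) * (Nat.factorial (2*k - n) : ℝ))
  else 0

lemma interior2 (a b : ℕ) :
    ((a+2*b+3).factorial : ℝ) * 2 ^ (a+1) / ((b+1).factorial * (a+1).factorial)
      = 2 * ((a+2*b+2).factorial * 2 ^ a / ((b+1).factorial * (a).factorial))
        + ((a:ℝ)+2) * ((a+2*b+2).factorial * 2 ^ (a+2) / ((b).factorial * (a+2).factorial)) := by
  have h1 : ((a+2*b+3).factorial : ℝ) = (a+2*b+3) * (a+2*b+2).factorial := by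
    rw [show a+2*b+3 = (a+2*b+2)+1 by ring, Nat.factorial_succ]; push_cast; ring
  have h2 : ((a+2).factorial : ℝ) = (a+2) * ((a+1) * a.factorial) := by
    rw [show a+2 = (a+1)+1 by ring, Nat.factorial_succ, Nat.factorial_succ]; push_cast; ring
  have h3 : ((a+1).factorial : ℝ) = (a+1) * a.factorial := by
    rw [Nat.factorial_succ]; push_cast; ring
  have h4 : ((b+1).factorial : ℝ) = (b+1) * b.factorial := by
    rw [Nat.factorial_succ]; push_cast; ring
  have fa : (a.factorial : ℝ) ≠ 0 := Nat.cast_ne_zero.2 a.factorial_ne_zero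
  have fb : (b.factorial : ℝ) ≠ 0 := Nat.cast_ne_zero.2 b.factorial_ne_zero
  rw [h1, h2, h3, h4]
  have ha1 : (a:ℝ)+1 ≠ 0 := by positivity
  have ha2 : (a:ℝ)+2 ≠ 0 := by positivity
  have hb1 : (b:ℝ)+1 ≠ 0 := by positivity
  field_simp
  ring

lemma key (n k : ℕ) (hn : 1 ≤ n) :
    C (n+1) k = 2 * C n (k-1) + ((2*k - n : ℤ) : ℝ) * C n k := by
  by_cases h1 : n + 2 ≤ 2*k ∧ k ≤ n
  · -- interior case
    obtain ⟨b, hb⟩ : ∃ b, n = k + b := ⟨n - k, by omega⟩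
    obtain ⟨a, ha⟩ : ∃ a, 2*k = n + 2 + a := ⟨2*k - n - 2, by omega⟩
    have hk : k = a + b + 2 := by omega
    subst hk; subst hb
    have e1 : C (a+b+2+b+1) (a+b+2) =
        ((a+2*b+3).factorial : ℝ) * 2 ^ (a+1) / ((b+1).factorial * (a+1).factorial) := by
      rw [C, if_pos (by omega), show a+b+2+b+1 - (a+b+2) = b+1 by omega,
        show 2*(a+b+2) - (a+b+2+b+1) = a+1 by omega,
        show a+b+2+b+1 = a+2*b+3 by omega]
    have e2 : C (a+b+2+b) (a+b+2-1) =
        ((a+2*b+2).factorial : ℝ) * 2 ^ a / ((b+1).factorial * (a).factorial) := by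
      rw [show a+b+2-1 = a+b+1 by omega, C, if_pos (by omega),
        show a+b+2+b - (a+b+1) = b+1 by omega,
        show 2*(a+b+1) - (a+b+2+b) = a by omega,
        show a+b+2+b = a+2*b+2 by omega]
    have e3 : C (a+b+2+b) (a+b+2) =
        ((a+2*b+2).factorial : ℝ) * 2 ^ (a+2) / ((b).factorial * (a+2).factorial) := by
      rw [C, if_pos (by omega), show a+b+2+b - (a+b+2) = b by omega,
        show 2*(a+b+2) - (a+b+2+b) = a+2 by omega,
        show a+b+2+b = a+2*b+2 by omega]
    rw [e1, e2, e3]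
    push_cast
    linear_combination interior2 a b
  by_cases h2 : k = n + 1
  · subst h2
    have fn : (n.factorial : ℝ) ≠ 0 := Nat.cast_ne_zero.2 n.factorial_ne_zero
    have e1 : C (n+1) (n+1) = 2^(n+1) := by
      rw [C, if_pos (by omega), show (n+1) - (n+1) = 0 by omega,
        show 2*(n+1) - (n+1) = n+1 by omega]
      simp [Nat.factorial]
      field_simp
    have e2 : C n (n+1-1) = 2^n := by
      rw [show n+1-1 = n by omega, C, if_pos (by omega), show n - n = 0 by omega,
        show 2*n - n = n by omega]
      simp [Nat.factorial]
      field_simp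
    have e3 : C n (n+1) = 0 := by rw [C, if_neg (by omega)]
    rw [e1, e2, e3]; push_cast; ring
  by_cases h3 : 2*k = n + 1
  · obtain ⟨b, hb⟩ : ∃ b, k = b + 1 := ⟨k - 1, by omega⟩
    subst hb
    have hn2 : n = 2*b + 1 := by omega
    subst hn2
    have e1 : C (2*b+1+1) (b+1) = ((2*b+2).factorial : ℝ) / (b+1).factorial := by
      rw [C, if_pos (by omega), show (2*b+1+1) - (b+1) = b+1 by omega,
        show 2*(b+1) - (2*b+1+1) = 0 by omega]
      simp
    have e2 : C (2*b+1) (b+1-1) = 0 := by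
      rw [C, if_neg (by omega)]
    have e3 : C (2*b+1) (b+1) = ((2*b+1).factorial : ℝ) * 2 / (b).factorial := by
      rw [C, if_pos (by omega), show (2*b+1) - (b+1) = b by omega,
        show 2*(b+1) - (2*b+1) = 1 by omega]
      simp [Nat.factorial]
    have h4 : ((2*b+2).factorial : ℝ) = (2*b+2) * (2*b+1).factorial := by
      rw [show 2*b+2 = (2*b+1)+1 by ring, Nat.factorial_succ]; push_cast; ring
    have h5 : ((b+1).factorial : ℝ) = (b+1) * b.factorial := by
      rw [Nat.factorial_succ]; push_cast; ring
    have fb : (b.factorial : ℝ) ≠ 0 := Nat.cast_ne_zero.2 b.factorial_ne_zero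
    have f21 : ((2*b+1).factorial : ℝ) ≠ 0 := Nat.cast_ne_zero.2 (2*b+1).factorial_ne_zero
    have hb1 : (b:ℝ)+1 ≠ 0 := by positivity
    rw [e1, e2, e3, h4, h5]
    push_cast
    field_simp
    ring
  · have e1 : C (n+1) k = 0 := by rw [C, if_neg (by omega)]
    have e2 : C n (k-1) = 0 := by rw [C, if_neg (by omega)]
    by_cases h4 : 2*k = n
    · have : ((2*(k:ℤ) - n : ℤ) : ℝ) = 0 := by
        rw [show (2*(k:ℤ) - n) = 0 by omega]; simp
      rw [e1, e2, this]; ring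
    · have e3 : C n k = 0 := by rw [C, if_neg (by omega)]
      rw [e1, e2, e3]; ring

lemma Q_succ (k : ℕ) (x : ℝ) : Q (k+1) x = Q k x * (x - k) := by
  simp [Q, Finset.prod_range_succ]

lemma aux : ∀ n : ℕ, 1 ≤ n → ∀ x : ℝ, Q n (2*x) = ∑ k ∈ Finset.range (n+1), C n k * Q k x := by
  intro n
  induction n with
  | zero => omega
  | succ n ih =>
    intro _ x
    by_cases hn : n = 0
    · subst hn
      norm_num [Q, C, Finset.sum_range_succ, Nat.factorial]
    · have hn1 : 1 ≤ n := by omega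
      rw [Q_succ, ih hn1 x, Finset.sum_mul]
      have per : ∀ k ∈ Finset.range (n+1), C n k * Q k x * (2*x - n)
          = 2 * (C n (k+1-1) * Q (k+1) x) + ((2*(k:ℤ) - n : ℤ):ℝ) * C n k * Q k x := by
        intro k _
        rw [Q_succ, Nat.add_sub_cancel]
        push_cast
        ring
      rw [Finset.sum_congr rfl per, Finset.sum_add_distrib]
      have shift : (∑ k ∈ Finset.range (n+1), 2 * (C n (k+1-1) * Q (k+1) x))
          = ∑ k ∈ Finset.range (n+2), 2 * (C n (k-1) * Q k x) := by
        rw [Finset.sum_range_succ' (fun k => 2 * (C n (k-1) * Q k x)) (n+1)]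
        have c0 : C n 0 = 0 := by rw [C, if_neg (by omega)]
        simp [c0]
      have ext : (∑ k ∈ Finset.range (n+1), ((2*(k:ℤ) - n : ℤ):ℝ) * C n k * Q k x)
          = ∑ k ∈ Finset.range (n+2), ((2*(k:ℤ) - n : ℤ):ℝ) * C n k * Q k x := by
        rw [Finset.sum_range_succ (fun k => ((2*(k:ℤ) - n : ℤ):ℝ) * C n k * Q k x) (n+1)]
        have cn1 : C n (n+1) = 0 := by rw [C, if_neg (by omega)]
        rw [cn1]; ring
      rw [shift, ext, ← Finset.sum_add_distrib]
      refine Finset.sum_congr rfl fun k _ => ?_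
      rw [key n k hn1]
      ring

theorem stmt_0 (n : ℕ) (hn : 1 ≤ n) (x : ℝ) :
    Q n (2 * x) =
      ∑ k ∈ Finset.Icc ((n + 1) / 2) n,
        ((Nat.factorial n : ℝ) * 2 ^ (2 * k - n) /
          ((Nat.factorial (n - k) : ℝ) * (Nat.factorial (2 * k - n) : ℝ))) * Q k x := by
  rw [aux n hn x]
  have hsub : Finset.Icc ((n+1)/2) n ⊆ Finset.range (n+1) := by
    intro k hk
    rw [Finset.mem_Icc] at hk
    rw [Finset.mem_range]
    omega
  have h0 : ∀ k ∈ Finset.range (n+1), k ∉ Finset.Icc ((n+1)/2) n → C n k * Q k x = 0 := by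
    intro k hk hk'
    rw [Finset.mem_range] at hk
    rw [Finset.mem_Icc] at hk'
    rw [C, if_neg (by omega)]
    ring
  rw [← Finset.sum_subset hsub h0]
  refine Finset.sum_congr rfl fun k hk => ?_
  rw [Finset.mem_Icc] at hk
  rw [C, if_pos (by omega)]
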